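/- Under the setup, suppose that for some n ≥ 0 the set 𝕋 \ A_n can be covered by c closed arcs each of length d^{-(N+n)}. Then 𝕋 \ A_{n+1} can be covered by d·c + 2(d−1) closed arcs each of length d^{-(N+n+1)}. -/

import Mathlib

open Set

noncomputable section

/-- The aligned arc of level `n` with index `j` in the circle `ℝ/ℤ`:
the image of the open interval `(j/d^n, (j+1)/d^n) ⊂ ℝ`. -/
def alignedArc (d n : ℕ) (j : ℤ) : Set UnitAddCircle :=
  (fun x : ℝ => (x : UnitAddCircle)) ''
    Set.Ioo ((j : ℝ) / (d : ℝ) ^ n) (((j : ℝ) + 1) / (d : ℝ) ^ n)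

/-- `I` is an aligned arc of level `n` (with respect to the base `d`). -/
def IsAlignedArc (d n : ℕ) (I : Set UnitAddCircle) : Prop :=
  ∃ j : ℤ, I = alignedArc d n j

/-- Multiplication by `d` on the circle `ℝ/ℤ`. -/
def mulMap (d : ℕ) : UnitAddCircle → UnitAddCircle := fun x => d • x

/-- The set of connected components of a subset of the circle. -/
def componentsOf (S : Set UnitAddCircle) : Set (Set UnitAddCircle) :=
  {C | ∃ x ∈ S, C = connectedComponentIn S x}

/-- All connected components of the preimages `g⁻¹(I)`, `I ∈ F`, where `g = mulMap d`. -/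
def compFamily (d : ℕ) (F : Set (Set UnitAddCircle)) : Set (Set UnitAddCircle) :=
  ⋃ I ∈ F, componentsOf (mulMap d ⁻¹' I)

/-- The closed arc in `ℝ/ℤ` that is the image of the closed interval `[a, a + ℓ] ⊂ ℝ`
(a closed arc of length `ℓ`, degenerate to a point if `ℓ = 0`). -/
def closedArc (a ℓ : ℝ) : Set UnitAddCircle :=
  (fun x : ℝ => (x : UnitAddCircle)) '' Set.Icc a (a + ℓ)

/-! ### Auxiliary machinery -/

/-- The open arc in `ℝ/ℤ` that is the image of the open interval `(a, a + ℓ) ⊂ ℝ`. -/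
def openArc (a ℓ : ℝ) : Set UnitAddCircle :=
  (fun x : ℝ => (x : UnitAddCircle)) '' Set.Ioo a (a + ℓ)

lemma coe_eq_coe_iff' {x y : ℝ} : ((x : UnitAddCircle) = y) ↔ ∃ k : ℤ, x - y = k := by
  rw [QuotientAddGroup.eq_iff_sub_mem]
  simp [AddSubgroup.mem_zmultiples_iff, eq_comm]

lemma mem_coe_image {s : Set ℝ} {y : ℝ} :
    (y : UnitAddCircle) ∈ (fun x : ℝ => (x : UnitAddCircle)) '' s ↔ ∃ p : ℤ, y + p ∈ s := by
  constructor
  · rintro ⟨t, ht, hty⟩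
    obtain ⟨k, hk⟩ := coe_eq_coe_iff'.1 hty
    exact ⟨k, by rw [show y + (k : ℝ) = t by linarith]; exact ht⟩
  · rintro ⟨p, hp⟩
    exact ⟨y + p, hp, coe_eq_coe_iff'.2 ⟨p, by ring⟩⟩

lemma mulMap_coe' (d : ℕ) (y : ℝ) :
    mulMap d ((y : ℝ) : UnitAddCircle) = (((d : ℝ) * y : ℝ) : UnitAddCircle) := by
  show (d : ℕ) • ((y : ℝ) : UnitAddCircle) = _
  rw [← QuotientAddGroup.mk_nsmul]
  norm_num

lemma key_decomp (d : ℕ) (hd : 0 < d) (y : ℝ) (p : ℤ) :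
    ∃ k : ℕ, k < d ∧ ∃ q : ℤ, (d : ℝ) * y + p = (d : ℝ) * (y - q) - k := by
  have hd' : (d : ℤ) ≠ 0 := by positivity
  refine ⟨((-p) % d).toNat, ?_, (-p) / d, ?_⟩
  · have h1 : (-p) % d < d := Int.emod_lt_of_pos _ (by exact_mod_cast hd)
    omega
  · have h0 : 0 ≤ (-p) % d := Int.emod_nonneg _ hd'
    have h2 : (d : ℤ) * ((-p) / d) + (-p) % d = -p := Int.mul_ediv_add_emod _ _
    have : ((((-p) % (d : ℤ)).toNat : ℕ) : ℝ) = (((-p) % (d : ℤ) : ℤ) : ℝ) := by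
      exact_mod_cast congrArg (Int.cast : ℤ → ℝ) (Int.toNat_of_nonneg h0)
    have h2' : (d : ℝ) * (((-p) / (d : ℤ) : ℤ) : ℝ) + (((-p) % (d : ℤ) : ℤ) : ℝ)
        = -(p : ℝ) := by exact_mod_cast h2
    push_cast
    linarith [h2', this]

lemma preimage_arc_subset_Icc (d : ℕ) (hd : 0 < d) (a ℓ : ℝ) :
    mulMap d ⁻¹' closedArc a ℓ ⊆ ⋃ k : Fin d, closedArc ((a + k) / d) (ℓ / d) := by
  have hd0 : (0:ℝ) < d := by exact_mod_cast hd
  intro z hz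
  obtain ⟨y, rfl⟩ := QuotientAddGroup.mk_surjective z
  rw [mem_preimage, mulMap_coe' d y, closedArc, mem_coe_image] at hz
  obtain ⟨p, hp⟩ := hz
  obtain ⟨k, hk, q, hq⟩ := key_decomp d hd y p
  refine mem_iUnion.2 ⟨⟨k, hk⟩, ?_⟩
  rw [closedArc]
  have hy : ((y : ℝ) : UnitAddCircle) = ((y - q : ℝ) : UnitAddCircle) :=
    (coe_eq_coe_iff'.2 ⟨-q, by push_cast; ring⟩).symm
  rw [hy]
  refine ⟨y - q, ?_, rfl⟩
  rw [hq] at hp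
  obtain ⟨h1, h2⟩ := hp
  constructor
  · rw [div_le_iff₀ hd0]; push_cast; linarith
  · rw [show (a + (k:ℝ)) / d + ℓ / d = (a + k + ℓ) / d by ring, le_div_iff₀ hd0]
    push_cast; linarith

lemma preimage_arc_subset_Ioo (d : ℕ) (hd : 0 < d) (a ℓ : ℝ) :
    mulMap d ⁻¹' openArc a ℓ ⊆ ⋃ k : Fin d, openArc ((a + k) / d) (ℓ / d) := by
  have hd0 : (0:ℝ) < d := by exact_mod_cast hd
  intro z hz
  obtain ⟨y, rfl⟩ := QuotientAddGroup.mk_surjective z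
  rw [mem_preimage, mulMap_coe' d y, openArc, mem_coe_image] at hz
  obtain ⟨p, hp⟩ := hz
  obtain ⟨k, hk, q, hq⟩ := key_decomp d hd y p
  refine mem_iUnion.2 ⟨⟨k, hk⟩, ?_⟩
  rw [openArc]
  have hy : ((y : ℝ) : UnitAddCircle) = ((y - q : ℝ) : UnitAddCircle) :=
    (coe_eq_coe_iff'.2 ⟨-q, by push_cast; ring⟩).symm
  rw [hy]
  refine ⟨y - q, ?_, rfl⟩
  rw [hq] at hp
  obtain ⟨h1, h2⟩ := hp
  constructor
  · rw [div_lt_iff₀ hd0]; push_cast; linarith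
  · rw [show (a + (k:ℝ)) / d + ℓ / d = (a + k + ℓ) / d by ring, lt_div_iff₀ hd0]
    push_cast; linarith

lemma openArc_isOpen (a ℓ : ℝ) : IsOpen (openArc a ℓ) :=
  QuotientAddGroup.isOpenMap_coe _ isOpen_Ioo

lemma openArc_disjoint (d : ℕ) (a ℓ : ℝ) (hℓ0 : 0 ≤ ℓ) (hℓ1 : ℓ < 1)
    (k k' : ℕ) (hk : k < d) (hk' : k' < d) (hne : k ≠ k') :
    Disjoint (openArc ((a + k) / d) (ℓ / d)) (openArc ((a + k') / d) (ℓ / d)) := by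
  have hdpos : 0 < d := by omega
  have hd0 : (0:ℝ) < d := by exact_mod_cast hdpos
  rw [Set.disjoint_left]
  rintro z ⟨t, ht, rfl⟩ hz2
  rw [openArc, mem_coe_image] at hz2
  obtain ⟨p, hp⟩ := hz2
  have b1 : a + (k:ℝ) < d * t := by
    have := ht.1; rw [div_lt_iff₀ hd0] at this; linarith
  have b2 : d * t < a + (k:ℝ) + ℓ := by
    have := ht.2
    rw [show (a + (k:ℝ)) / d + ℓ / d = (a + k + ℓ) / d by ring, lt_div_iff₀ hd0] at this
    linarith
  have b3 : a + (k':ℝ) < d * (t + p) := by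
    have := hp.1; rw [div_lt_iff₀ hd0] at this; linarith
  have b4 : d * (t + p) < a + (k':ℝ) + ℓ := by
    have := hp.2
    rw [show (a + (k':ℝ)) / d + ℓ / d = (a + k' + ℓ) / d by ring, lt_div_iff₀ hd0] at this
    linarith
  have e1 : ((d : ℝ) * p + k - k' : ℝ) < 1 := by nlinarith
  have e2 : (-1 : ℝ) < (d : ℝ) * p + k - k' := by nlinarith
  have eZ1 : ((d : ℤ) * p + k - k' : ℤ) < 1 := by exact_mod_cast e1
  have eZ2 : (-1 : ℤ) < ((d : ℤ) * p + k - k' : ℤ) := by exact_mod_cast e2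
  have e0 : (d : ℤ) * p + k - k' = 0 := by omega
  have hd1 : (1:ℤ) ≤ (d:ℤ) := by exact_mod_cast hdpos
  have hkZ : (k:ℤ) < d := by exact_mod_cast hk
  have hkZ' : (k':ℤ) < d := by exact_mod_cast hk'
  have hk0 : (0:ℤ) ≤ k := Int.ofNat_nonneg k
  have hk0' : (0:ℤ) ≤ k' := Int.ofNat_nonneg k'
  rcases lt_trichotomy p 0 with h | h | h
  · have h1 : p ≤ -1 := by omega
    have h2 : (d:ℤ) * p ≤ (d:ℤ) * (-1) := mul_le_mul_of_nonneg_left h1 (by omega)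
    linarith
  · subst h
    simp only [mul_zero, zero_add] at e0
    exact hne (by omega)
  · have h1 : (1:ℤ) ≤ p := by omega
    have h2 : (d:ℤ) * 1 ≤ (d:ℤ) * p := mul_le_mul_of_nonneg_left h1 (by omega)
    linarith

lemma comp_subset (d : ℕ) (hd : 0 < d) (a ℓ : ℝ) (hℓ0 : 0 ≤ ℓ) (hℓ1 : ℓ < 1)
    (S : Set UnitAddCircle) (hS : S ⊆ openArc a ℓ) (x : UnitAddCircle)
    (hx : x ∈ mulMap d ⁻¹' S) :
    ∃ k : ℕ, k < d ∧
      connectedComponentIn (mulMap d ⁻¹' S) x ⊆ openArc ((a + k) / d) (ℓ / d) := by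
  have hsub : mulMap d ⁻¹' S ⊆ ⋃ k : Fin d, openArc ((a + (k : ℕ)) / d) (ℓ / d) :=
    subset_trans (preimage_mono hS) (preimage_arc_subset_Ioo d hd a ℓ)
  obtain ⟨k₀, hk₀⟩ := mem_iUnion.1 (hsub hx)
  refine ⟨k₀, k₀.2, ?_⟩
  set u := openArc ((a + ((k₀ : ℕ) : ℝ)) / d) (ℓ / d) with hu_def
  set v := ⋃ k : Fin d, ⋃ _ : k ≠ k₀, openArc ((a + ((k : ℕ) : ℝ)) / d) (ℓ / d) with hv_def
  have hu : IsOpen u := openArc_isOpen _ _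
  have hv : IsOpen v := isOpen_iUnion fun k => isOpen_iUnion fun _ => openArc_isOpen _ _
  have huv : Disjoint u v := by
    rw [Set.disjoint_iUnion_right]
    intro k
    rw [Set.disjoint_iUnion_right]
    intro hne
    exact openArc_disjoint d a ℓ hℓ0 hℓ1 k₀ k k₀.2 k.2 (fun h => hne (Fin.ext h.symm))
  have hsuv : connectedComponentIn (mulMap d ⁻¹' S) x ⊆ u ∪ v := by
    refine subset_trans (subset_trans (connectedComponentIn_subset _ _) hsub) ?_
    intro z hz
    obtain ⟨k, hk⟩ := mem_iUnion.1 hz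
    by_cases h : k = k₀
    · subst h; exact Or.inl hk
    · exact Or.inr (mem_iUnion.2 ⟨k, mem_iUnion.2 ⟨h, hk⟩⟩)
  have hne : (connectedComponentIn (mulMap d ⁻¹' S) x ∩ u).Nonempty :=
    ⟨x, mem_connectedComponentIn hx, hk₀⟩
  exact isPreconnected_connectedComponentIn.subset_left_of_subset_union hu hv huv hsuv hne

lemma invariant (d N : ℕ) (hd : 2 ≤ d) (hN : 1 ≤ N)
    (I₁ I₂ I₃ : Set UnitAddCircle)
    (hI₁ : IsAlignedArc d N I₁) (hI₂ : IsAlignedArc d N I₂) (hI₃ : IsAlignedArc d N I₃)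
    (𝓘 : ℕ → Set (Set UnitAddCircle))
    (h0 : 𝓘 0 = {I₁, I₂, I₃})
    (hrec : ∀ n, ∃ R ⊆ compFamily d (𝓘 n),
      R.ncard = 2 * (d - 1) ∧ 𝓘 (n + 1) = compFamily d (𝓘 n) \ R) :
    ∀ n, ∀ I ∈ 𝓘 n, ∃ a : ℝ, I ⊆ openArc a (((d : ℝ) ^ (N + n))⁻¹) := by
  have hd0 : (0:ℝ) < d := by positivity
  intro n
  induction n with
  | zero =>
    intro I hI
    rw [h0] at hI
    have key : ∀ J, IsAlignedArc d N J →
        ∃ a, J ⊆ openArc a (((d : ℝ) ^ (N + 0))⁻¹) := by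
      rintro J ⟨j, rfl⟩
      refine ⟨(j : ℝ) / (d : ℝ) ^ N, ?_⟩
      rw [alignedArc, openArc]
      have hdp : ((d : ℝ) ^ N) ≠ 0 := by positivity
      rw [show (j : ℝ) / (d : ℝ) ^ N + ((d : ℝ) ^ (N + 0))⁻¹
          = ((j : ℝ) + 1) / (d : ℝ) ^ N by rw [Nat.add_zero]; field_simp]
    simp only [mem_insert_iff, mem_singleton_iff] at hI
    rcases hI with rfl | rfl | rfl
    exacts [key _ hI₁, key _ hI₂, key _ hI₃]
  | succ n ih =>
    intro I hI
    obtain ⟨R, hRsub, hcard, heq⟩ := hrec n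
    rw [heq] at hI
    have hI' := hI.1
    rw [compFamily, mem_iUnion₂] at hI'
    obtain ⟨J, hJ, hIc⟩ := hI'
    obtain ⟨x, hxJ, rfl⟩ := hIc
    obtain ⟨a, ha⟩ := ih J hJ
    have h1 : (0:ℝ) ≤ ((d : ℝ) ^ (N + n))⁻¹ := by positivity
    have h2 : ((d : ℝ) ^ (N + n))⁻¹ < 1 := by
      rw [inv_lt_one_iff₀]
      right
      apply one_lt_pow₀ (by exact_mod_cast hd) (by omega)
    obtain ⟨k, hk, hsub⟩ := comp_subset d (by omega) a _ h1 h2 J ha x hxJ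
    refine ⟨(a + k) / d, ?_⟩
    rw [show ((d : ℝ) ^ (N + (n + 1)))⁻¹ = ((d : ℝ) ^ (N + n))⁻¹ / d by
      rw [show N + (n + 1) = (N + n) + 1 by ring, pow_succ, mul_inv, div_eq_mul_inv]]
    exact hsub

/-- under the setup, if `𝕋 \ Aₙ` can be covered by `c` closed arcs of length
`d^-(N+n)`, then `𝕋 \ Aₙ₊₁` can be covered by `d·c + 2(d-1)` closed arcs of length
`d^-(N+n+1)`. -/
theorem cover_step (d N : ℕ) (hd : 2 ≤ d) (hN : 1 ≤ N)
    (I₁ I₂ I₃ : Set UnitAddCircle)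
    (hI₁ : IsAlignedArc d N I₁) (hI₂ : IsAlignedArc d N I₂) (hI₃ : IsAlignedArc d N I₃)
    (hd₁₂ : Disjoint I₁ I₂) (hd₁₃ : Disjoint I₁ I₃) (hd₂₃ : Disjoint I₂ I₃)
    (𝓘 : ℕ → Set (Set UnitAddCircle))
    (h0 : 𝓘 0 = {I₁, I₂, I₃})
    (hrec : ∀ n, ∃ R ⊆ compFamily d (𝓘 n),
      R.ncard = 2 * (d - 1) ∧ 𝓘 (n + 1) = compFamily d (𝓘 n) \ R)
    (A : ℕ → Set UnitAddCircle) (hA : ∀ n, A n = ⋃ I ∈ 𝓘 n, I)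
    (n c : ℕ) (a : Fin c → ℝ)
    (hcov : (A n)ᶜ ⊆ ⋃ i, closedArc (a i) (((d : ℝ) ^ (N + n))⁻¹)) :
    ∃ b : Fin (d * c + 2 * (d - 1)) → ℝ,
      (A (n + 1))ᶜ ⊆ ⋃ i, closedArc (b i) (((d : ℝ) ^ (N + n + 1))⁻¹) := by
  classical
  have hd0 : (0:ℝ) < d := by positivity
  obtain ⟨R, hRsub, hcard, heq⟩ := hrec n
  set ℓ : ℝ := ((d : ℝ) ^ (N + n))⁻¹ with hℓ_def
  set ℓ' : ℝ := ((d : ℝ) ^ (N + n + 1))⁻¹ with hℓ'_def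
  have hℓdiv : ℓ / d = ℓ' := by
    rw [hℓ_def, hℓ'_def, pow_succ, mul_inv, div_eq_mul_inv]
  -- Step 1: complement inclusion
  have hcomp : (A (n + 1))ᶜ ⊆ (mulMap d ⁻¹' (A n)ᶜ) ∪ ⋃₀ R := by
    intro x hx
    by_cases hg : mulMap d x ∈ A n
    · rw [hA n, mem_iUnion₂] at hg
      obtain ⟨I, hI, hgI⟩ := hg
      have hxI : x ∈ mulMap d ⁻¹' I := hgI
      set C := connectedComponentIn (mulMap d ⁻¹' I) x with hC_def
      have hxC : x ∈ C := mem_connectedComponentIn hxI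
      have hCfam : C ∈ compFamily d (𝓘 n) := by
        rw [compFamily, mem_iUnion₂]
        exact ⟨I, hI, ⟨x, hxI, rfl⟩⟩
      by_cases hCR : C ∈ R
      · exact Or.inr ⟨C, hCR, hxC⟩
      · exfalso
        apply hx
        rw [hA (n + 1), mem_iUnion₂]
        exact ⟨C, by rw [heq]; exact ⟨hCfam, hCR⟩, hxC⟩
    · exact Or.inl hg
  -- Step 2: the removed components are each inside a closed arc of length ℓ'
  have hinv := invariant d N hd hN I₁ I₂ I₃ hI₁ hI₂ hI₃ 𝓘 h0 hrec
  have hRarc : ∀ C ∈ R, ∃ t : ℝ, C ⊆ closedArc t ℓ' := by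
    intro C hC
    have hC' := hRsub hC
    rw [compFamily, mem_iUnion₂] at hC'
    obtain ⟨J, hJ, x, hxJ, rfl⟩ := hC'
    obtain ⟨t, ht⟩ := hinv n J hJ
    have h1 : (0:ℝ) ≤ ℓ := by positivity
    have h2 : ℓ < 1 := by
      rw [hℓ_def, inv_lt_one_iff₀]
      right
      apply one_lt_pow₀ (by exact_mod_cast hd) (by omega)
    obtain ⟨k, hk, hsub⟩ := comp_subset d (by omega) t ℓ h1 h2 J ht x hxJ
    refine ⟨(t + k) / d, subset_trans hsub ?_⟩
    rw [hℓdiv, openArc, closedArc]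
    exact image_mono Ioo_subset_Icc_self
  -- Step 3: enumerate R
  have hRfin : R.Finite := by
    apply Set.finite_of_ncard_ne_zero
    rw [hcard]; omega
  haveI := hRfin.fintype
  have hcardR : Fintype.card R = 2 * (d - 1) := by
    rw [← Set.toFinset_card, ← Set.ncard_eq_toFinset_card' R]
    exact hcard
  obtain e : ↥R ≃ Fin (2 * (d - 1)) := Fintype.equivFinOfCardEq hcardR
  have hchoose : ∀ C : ↥R, ∃ t : ℝ, (C : Set UnitAddCircle) ⊆ closedArc t ℓ' :=
    fun C => hRarc C C.2
  choose f hf using hchoose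
  set bR : Fin (2 * (d - 1)) → ℝ := fun i => f (e.symm i) with hbR_def
  have hRcov : ⋃₀ R ⊆ ⋃ i : Fin (2 * (d - 1)), closedArc (bR i) ℓ' := by
    rintro x ⟨C, hC, hxC⟩
    refine mem_iUnion.2 ⟨e ⟨C, hC⟩, ?_⟩
    have : bR (e ⟨C, hC⟩) = f ⟨C, hC⟩ := by rw [hbR_def]; simp
    rw [this]
    exact hf ⟨C, hC⟩ hxC
  -- Step 4: cover of the preimage part
  set bL : Fin (d * c) → ℝ :=
    fun j => (a (finProdFinEquiv.symm j).2 + ((finProdFinEquiv.symm j).1 : ℕ)) / d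
    with hbL_def
  have hLcov : mulMap d ⁻¹' (A n)ᶜ ⊆ ⋃ j : Fin (d * c), closedArc (bL j) ℓ' := by
    intro x hx
    have hgx : mulMap d x ∈ ⋃ i, closedArc (a i) ℓ := hcov hx
    obtain ⟨i, hi⟩ := mem_iUnion.1 hgx
    have : x ∈ ⋃ k : Fin d, closedArc ((a i + (k : ℕ)) / d) (ℓ / d) :=
      preimage_arc_subset_Icc d (by omega) (a i) ℓ hi
    obtain ⟨k, hk⟩ := mem_iUnion.1 this
    refine mem_iUnion.2 ⟨finProdFinEquiv (k, i), ?_⟩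
    have hb : bL (finProdFinEquiv (k, i)) = (a i + (k : ℕ)) / d := by
      rw [hbL_def]; simp
    rw [hb, ← hℓdiv]
    exact hk
  -- Step 5: combine
  refine ⟨fun i => Sum.elim bL bR (finSumFinEquiv.symm i), ?_⟩
  intro x hx
  rcases hcomp hx with h | h
  · obtain ⟨j, hj⟩ := mem_iUnion.1 (hLcov h)
    refine mem_iUnion.2 ⟨finSumFinEquiv (Sum.inl j), ?_⟩
    simpa using hj
  · obtain ⟨j, hj⟩ := mem_iUnion.1 (hRcov h)
    refine mem_iUnion.2 ⟨finSumFinEquiv (Sum.inr j), ?_⟩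
    simpa using hj
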